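/- Let A be a unital B_0-algebra with an orthogonal basis (e_n). If there exists x = Σ t_n e_n ∈ A with t_n real, t_n ≤ t_{n+1} for all n, and t_n → ∞, then every multiplicative linear functional on A is continuous. -/

import Mathlib

open Filter Topology Uniformity

/-- `x = Σ_{n} a n • e n` as convergence of ordered partial sums. -/
def HasExpansion {A : Type*} [AddCommMonoid A] [Module ℂ A] [TopologicalSpace A]
    (a : ℕ → ℂ) (e : ℕ → A) (x : A) : Prop :=
  Tendsto (fun N => ∑ n ∈ Finset.range N, a n • e n) atTop (𝓝 x)

section Aux

variable {A : Type*} [AddCommGroup A] [Module ℂ A]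

private lemma seminorm_sum_le (p : Seminorm ℂ A) (s : Finset ℕ) (f : ℕ → A) :
    p (∑ i ∈ s, f i) ≤ ∑ i ∈ s, p (f i) := by
  classical
  induction s using Finset.cons_induction with
  | empty => simp
  | cons a s ha ih =>
      rw [Finset.sum_cons, Finset.sum_cons]
      exact le_trans (map_add_le_add p _ _) (by gcongr)

private lemma pmono_le (p : ℕ → Seminorm ℂ A) (hmono : ∀ i x, p i x ≤ p (i + 1) x) :
    ∀ {i j : ℕ}, i ≤ j → ∀ x, p i x ≤ p j x := by
  intro i j h x
  induction j, h using Nat.le_induction with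
  | base => exact le_rfl
  | succ n hn ih => exact ih.trans (hmono n x)

private lemma abel_id (c : ℕ → ℂ) (e : ℕ → A) :
    ∀ M, ∑ n ∈ Finset.range (M + 1), c n • e n
      = c M • (∑ n ∈ Finset.range (M + 1), e n)
        + ∑ n ∈ Finset.range M, (c n - c (n + 1)) • (∑ k ∈ Finset.range (n + 1), e k) := by
  intro M
  induction M with
  | zero => simp
  | succ M ih =>
      rw [Finset.sum_range_succ (f := fun n => c n • e n), ih,
        Finset.sum_range_succ (f := fun n => (c n - c (n + 1)) • (∑ k ∈ Finset.range (n + 1), e k)),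
        Finset.sum_range_succ (f := e) (n := M + 1), sub_smul, smul_add]
      abel

variable [UniformSpace A] [IsUniformAddGroup A]

private lemma exists_limit (p : ℕ → Seminorm ℂ A) (hp : WithSeminorms p)
    (hmono : ∀ i x, p i x ≤ p (i + 1) x) [CompleteSpace A] (u : ℕ → A)
    (h : ∀ i : ℕ, ∀ ε > (0:ℝ), ∃ K, ∀ m, K ≤ m → ∀ n, K ≤ n → p i (u n - u m) < ε) :
    ∃ y, Tendsto u atTop (𝓝 y) := by
  have hb : (𝓤 A).HasBasis (fun sr : Finset ℕ × ℝ => 0 < sr.2)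
      (fun sr => (fun q : A × A => q.2 - q.1) ⁻¹' ((sr.1.sup p).ball 0 sr.2)) := by
    rw [uniformity_eq_comap_nhds_zero A]
    exact hp.hasBasis_zero_ball.comap _
  have hcs : CauchySeq u := by
    refine hb.cauchySeq_iff.2 ?_
    rintro ⟨s, r⟩ hr
    obtain ⟨K, hK⟩ := h (s.sup id) r hr
    refine ⟨K, fun m hm n hn => ?_⟩
    simp only [Set.mem_preimage, Seminorm.mem_ball, sub_zero]
    refine lt_of_le_of_lt (Seminorm.finset_sup_apply_le (apply_nonneg _ _) fun i hi =>
      pmono_le p hmono (Finset.le_sup (f := id) hi) _) (hK m hm n hn)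
  exact cauchySeq_tendsto_of_complete hcs

end Aux

section Aux2

variable {A : Type*} [Ring A] [Algebra ℂ A] [UniformSpace A] [IsUniformAddGroup A]

private lemma tendsto_mul_aux (p : ℕ → Seminorm ℂ A) (hp : WithSeminorms p)
    (hsub : ∀ i x y, p i (x * y) ≤ p (i + 1) x * p (i + 1) y)
    (u v : ℕ → A) (a b : A) (hu : Tendsto u atTop (𝓝 a)) (hv : Tendsto v atTop (𝓝 b)) :
    Tendsto (fun n => u n * v n) atTop (𝓝 (a * b)) := by
  refine (hp.tendsto_nhds _ _).2 fun i ε hε => ?_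
  have hu' := (hp.tendsto_nhds u a).1 hu (i + 1)
  have hv' := (hp.tendsto_nhds v b).1 hv (i + 1)
  set C : ℝ := p (i + 1) a + p (i + 1) b + 1 with hC
  have hC0 : 0 < C := by positivity
  set δ : ℝ := min 1 (ε / (2 * C)) with hδdef
  have hδ : 0 < δ := by positivity
  have hδ1 : δ ≤ 1 := min_le_left _ _
  have hkey : δ * C < ε := by
    have h1 : δ * C ≤ (ε / (2 * C)) * C :=
      mul_le_mul_of_nonneg_right (min_le_right _ _) hC0.le
    have h2 : (ε / (2 * C)) * C = ε / 2 := by field_simp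
    rw [h2] at h1
    exact lt_of_le_of_lt h1 (half_lt_self hε)
  filter_upwards [hu' δ hδ, hv' δ hδ] with n h1 h2
  have hvb : p (i + 1) (v n) ≤ p (i + 1) b + 1 := by
    have : p (i + 1) (v n) ≤ p (i + 1) (v n - b) + p (i + 1) b := by
      simpa using map_add_le_add (p (i + 1)) (v n - b) b
    linarith [lt_of_lt_of_le h2 hδ1]
  calc p i (u n * v n - a * b) ≤ p i ((u n - a) * v n) + p i (a * (v n - b)) := by
        have hws : u n * v n - a * b = (u n - a) * v n + a * (v n - b) := by noncomm_ring
        rw [hws]; exact map_add_le_add _ _ _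
    _ ≤ p (i + 1) (u n - a) * p (i + 1) (v n) + p (i + 1) a * p (i + 1) (v n - b) :=
        add_le_add (hsub i _ _) (hsub i _ _)
    _ ≤ δ * (p (i + 1) b + 1) + p (i + 1) a * δ :=
        add_le_add (mul_le_mul h1.le hvb (apply_nonneg _ _) hδ.le)
          (mul_le_mul_of_nonneg_left h2.le (apply_nonneg _ _))
    _ = δ * C := by rw [hC]; ring
    _ < ε := hkey

end Aux2

/-- If some x = Σ tₙ eₙ has real coefficients increasing to ∞, then every multiplicative
linear functional on A is continuous. -/
theorem stmt7 {A : Type*} [Ring A] [Algebra ℂ A] [UniformSpace A] [T2Space A]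
    [IsUniformAddGroup A] [ContinuousSMul ℂ A] [CompleteSpace A]
    (p : ℕ → Seminorm ℂ A) (hp : WithSeminorms p)
    (hmono : ∀ i x, p i x ≤ p (i + 1) x)
    (hsub : ∀ i x y, p i (x * y) ≤ p (i + 1) x * p (i + 1) y)
    (e : ℕ → A) (coef : A → ℕ → ℂ)
    (horth : ∀ i j, e i * e j = if i = j then e i else 0)
    (hbasis : ∀ x, HasExpansion (coef x) e x)
    (huniq : ∀ x a, HasExpansion a e x → a = coef x)
    (t : ℕ → ℝ) (ht : Monotone t) (htop : Tendsto t atTop atTop)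
    (x : A) (hx : HasExpansion (fun n => (t n : ℂ)) e x) :
    ∀ f : A → ℂ, IsLinearMap ℂ f → (∀ y z, f (y * z) = f y * f z) → Continuous f := by
  classical
  intro f hlin hmul
  -- the basis vectors are nonzero
  have e_ne : ∀ n, e n ≠ 0 := by
    intro n hn
    have h1 : HasExpansion (fun m => if m = n then (1:ℂ) else 0) e 0 := by
      have hz : ∀ M, ∑ m ∈ Finset.range M, (if m = n then (1:ℂ) else 0) • e m = 0 := by
        intro M
        simp [ite_smul, Finset.sum_ite_eq', hn]
      unfold HasExpansion
      simp only [hz]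
      exact tendsto_const_nhds
    have h2 : HasExpansion (fun _ => (0:ℂ)) e 0 := by
      unfold HasExpansion
      simp only [zero_smul, Finset.sum_const_zero]
      exact tendsto_const_nhds
    have h3 := (huniq 0 _ h1).trans (huniq 0 _ h2).symm
    have h4 := congrFun h3 n
    simp at h4
  have sep : ∀ y : A, y ≠ 0 → ∃ i, p i y ≠ 0 := fun y hy => hp.separating_of_T1 y hy
  have hmulT : ∀ (u v : ℕ → A) (a b : A), Tendsto u atTop (𝓝 a) → Tendsto v atTop (𝓝 b) →
      Tendsto (fun n => u n * v n) atTop (𝓝 (a * b)) := fun u v a b hu hv =>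
    tendsto_mul_aux p hp hsub u v a b hu hv
  -- multiplication by a basis vector reads off the coefficient
  have coef_mul : ∀ y j, y * e j = coef y j • e j := by
    intro y j
    have h1 : Tendsto (fun M => (∑ n ∈ Finset.range M, coef y n • e n) * e j) atTop
        (𝓝 (y * e j)) := hmulT _ _ _ _ (hbasis y) tendsto_const_nhds
    have h2 : ∀ᶠ M in atTop,
        (∑ n ∈ Finset.range M, coef y n • e n) * e j = coef y j • e j := by
      filter_upwards [eventually_ge_atTop (j + 1)] with M hM
      rw [Finset.sum_mul]
      have hterm : ∀ n ∈ Finset.range M,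
          (coef y n • e n) * e j = if n = j then coef y n • e n else 0 := by
        intro n _
        rw [smul_mul_assoc, horth n j]
        by_cases h : n = j
        · simp [h]
        · simp [h]
      rw [Finset.sum_congr rfl hterm, Finset.sum_ite_eq' (Finset.range M) j
        (fun n => coef y n • e n)]
      simp [Finset.mem_range.mpr (lt_of_lt_of_le (Nat.lt_succ_self j) hM)]
    exact tendsto_nhds_unique (h1.congr' h2) tendsto_const_nhds
  -- expansion of 1
  have hc1 : ∀ n, coef 1 n = 1 := by
    intro n
    have h := coef_mul 1 n
    rw [one_mul] at h
    have h0 : (coef 1 n - 1) • e n = 0 := by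
      rw [sub_smul, one_smul, ← h, sub_self]
    rcases smul_eq_zero.mp h0 with h' | h'
    · exact sub_eq_zero.mp h'
    · exact absurd h' (e_ne n)
  have hG : Tendsto (fun M => ∑ n ∈ Finset.range M, e n) atTop (𝓝 (1 : A)) := by
    have h1 := hbasis 1
    unfold HasExpansion at h1
    simpa only [hc1, one_smul] using h1
  by_cases hzero : ∀ y, f y = 0
  · have : f = fun _ => 0 := funext hzero
    rw [this]; exact continuous_const
  push_neg at hzero
  obtain ⟨y₀, hy₀⟩ := hzero
  have hf1 : f 1 = 1 := by
    have h := hmul y₀ 1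
    rw [mul_one] at h
    exact (mul_left_cancel₀ hy₀ (by rw [mul_one]; exact h)).symm
  by_cases hE : ∃ n₀, f (e n₀) ≠ 0
  · -- f is a coordinate functional, hence continuous
    obtain ⟨n₀, hn₀⟩ := hE
    have he1 : f (e n₀) = 1 := by
      have h := hmul (e n₀) (e n₀)
      rw [horth n₀ n₀, if_pos rfl] at h
      exact (mul_left_cancel₀ hn₀ (by rw [mul_one]; exact h)).symm
    have hfc : ∀ y, f y = coef y n₀ := by
      intro y
      have h1 : f (y * e n₀) = f y := by rw [hmul, he1, mul_one]
      have h2 : f (y * e n₀) = coef y n₀ := by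
        rw [coef_mul y n₀, hlin.map_smul, smul_eq_mul, he1, mul_one]
      exact h1.symm.trans h2
    obtain ⟨i, hpi⟩ := sep (e n₀) (e_ne n₀)
    have hpi0 : 0 < p i (e n₀) := lt_of_le_of_ne (apply_nonneg _ _) (Ne.symm hpi)
    set C : ℝ := p (i + 1) (e n₀) / p i (e n₀) with hCdef
    have hC0 : 0 ≤ C := div_nonneg (apply_nonneg _ _) hpi0.le
    have hbound : ∀ y, ‖f y‖ ≤ C * p (i + 1) y := by
      intro y
      have h1 : ‖coef y n₀‖ * p i (e n₀) = p i (y * e n₀) := by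
        rw [coef_mul y n₀, map_smul_eq_mul]
      have h2 : p i (y * e n₀) ≤ p (i + 1) y * p (i + 1) (e n₀) := hsub i y (e n₀)
      have h3 : ‖coef y n₀‖ * p i (e n₀) ≤ p (i + 1) y * p (i + 1) (e n₀) := h1.le.trans h2
      rw [hfc y]
      calc ‖coef y n₀‖ = ‖coef y n₀‖ * p i (e n₀) / p i (e n₀) := by field_simp
        _ ≤ p (i + 1) y * p (i + 1) (e n₀) / p i (e n₀) := by gcongr
        _ = C * p (i + 1) y := by rw [hCdef]; ring
    rw [continuous_iff_continuousAt]
    intro y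
    unfold ContinuousAt
    rw [Metric.tendsto_nhds]
    intro ε hε
    have hev := (hp.tendsto_nhds (fun z : A => z) y).1 tendsto_id (i + 1) (ε / (C + 1))
      (by positivity)
    filter_upwards [hev] with z hz
    have hfz : f z - f y = f (z - y) := by
      have := map_sub (IsLinearMap.mk' f hlin) z y
      simp only [IsLinearMap.mk'_apply] at this
      exact this.symm
    rw [Complex.dist_eq, hfz]
    have hfrac : C / (C + 1) < 1 := (div_lt_one (by positivity)).2 (lt_add_one C)
    calc ‖f (z - y)‖ ≤ C * p (i + 1) (z - y) := hbound _
      _ ≤ C * (ε / (C + 1)) := mul_le_mul_of_nonneg_left hz.le hC0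
      _ = ε * (C / (C + 1)) := by ring
      _ < ε * 1 := mul_lt_mul_of_pos_left hfrac hε
      _ = ε := mul_one ε
  · -- f vanishes on all basis vectors: contradiction
    push_neg at hE
    exfalso
    set l : ℂ := f x with hl
    obtain ⟨N, hN⟩ : ∃ N, ∀ n, N ≤ n → ‖l‖ + 1 ≤ t n := by
      have h := htop.eventually_ge_atTop (‖l‖ + 1)
      rw [eventually_atTop] at h
      obtain ⟨N, hN⟩ := h
      exact ⟨N, fun n hn => hN n hn⟩
    set d : ℕ → ℂ := fun n => if n < N then 1 else ((t n : ℂ) - l) with hd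
    set c : ℕ → ℂ := fun n => (d n)⁻¹ with hc
    have hd_eq : ∀ n, N ≤ n → d n = ((t n : ℂ) - l) := by
      intro n hn; simp [hd, Nat.not_lt.mpr hn]
    have htpos : ∀ n, N ≤ n → 0 < t n - ‖l‖ := by
      intro n hn
      have := hN n hn
      have := norm_nonneg l
      linarith
    have hd_norm : ∀ n, N ≤ n → t n - ‖l‖ ≤ ‖d n‖ := by
      intro n hn
      rw [hd_eq n hn]
      have h1 : ‖(t n : ℂ)‖ = |t n| := by rw [Complex.norm_real, Real.norm_eq_abs]
      have h2 : |t n| = t n := abs_of_pos (by nlinarith [hN n hn, norm_nonneg l])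
      calc t n - ‖l‖ = ‖(t n : ℂ)‖ - ‖l‖ := by rw [h1, h2]
        _ ≤ ‖(t n : ℂ) - l‖ := norm_sub_norm_le _ _
    have hd_one : ∀ n, (1:ℝ) ≤ ‖d n‖ := by
      intro n
      by_cases hn : n < N
      · simp [hd, hn]
      · push_neg at hn
        have h1 := hd_norm n hn
        have h2 := hN n hn
        linarith
    have hd_ne : ∀ n, d n ≠ 0 := by
      intro n h
      have := hd_one n
      rw [h, norm_zero] at this
      linarith
    have hdc : ∀ n, d n * c n = 1 := fun n => mul_inv_cancel₀ (hd_ne n)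
    have hc_norm : ∀ n, ‖c n‖ = ‖d n‖⁻¹ := by
      intro n; rw [hc]; exact norm_inv _
    have hc0 : Tendsto c atTop (𝓝 0) := by
      rw [tendsto_zero_iff_norm_tendsto_zero]
      have hbnd : Tendsto (fun n => (t n - ‖l‖)⁻¹) atTop (𝓝 0) := by
        apply Tendsto.inv_tendsto_atTop
        exact (tendsto_atTop_add_const_right atTop (-‖l‖) htop).congr
          (fun n => (sub_eq_add_neg (t n) ‖l‖).symm)
      apply squeeze_zero' (Eventually.of_forall fun n => norm_nonneg _) ?_ hbnd
      filter_upwards [eventually_ge_atTop N] with n hn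
      rw [hc_norm n]
      exact inv_anti₀ (htpos n hn) (hd_norm n hn)
    -- summability of the variation
    have hvar : Summable (fun n => ‖c (n + 1) - c n‖) := by
      rw [← summable_nat_add_iff N]
      have hposk : ∀ k : ℕ, 0 < t (k + N) - ‖l‖ := fun k => htpos (k + N) (Nat.le_add_left N k)
      have hle : ∀ k : ℕ, ‖c (k + N + 1) - c (k + N)‖ ≤
          (t (k + N) - ‖l‖)⁻¹ - (t (k + N + 1) - ‖l‖)⁻¹ := by
        intro k
        have hk1 : N ≤ k + N := Nat.le_add_left N k
        have hk2 : N ≤ k + N + 1 := le_trans hk1 (Nat.le_succ _)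
        have key : c (k + N + 1) - c (k + N)
            = (d (k + N) - d (k + N + 1)) * (d (k + N + 1))⁻¹ * (d (k + N))⁻¹ := by
          have hr : (d (k + N) - d (k + N + 1)) * (d (k + N + 1))⁻¹ * (d (k + N))⁻¹
              = d (k + N) * (d (k + N))⁻¹ * (d (k + N + 1))⁻¹
                - d (k + N + 1) * (d (k + N + 1))⁻¹ * (d (k + N))⁻¹ := by ring
          rw [hr, mul_inv_cancel₀ (hd_ne (k + N)), mul_inv_cancel₀ (hd_ne (k + N + 1)),
            one_mul, one_mul]
        rw [key, norm_mul, norm_mul, norm_inv, norm_inv]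
        have hnum : d (k + N) - d (k + N + 1) = ((t (k + N) - t (k + N + 1) : ℝ) : ℂ) := by
          rw [hd_eq _ hk1, hd_eq _ hk2]
          push_cast
          ring
        have hmono1 : t (k + N) ≤ t (k + N + 1) := ht (Nat.le_succ (k + N))
        have hnn : ‖d (k + N) - d (k + N + 1)‖ = t (k + N + 1) - t (k + N) := by
          rw [hnum, Complex.norm_real, Real.norm_eq_abs,
            abs_of_nonpos (by linarith : t (k + N) - t (k + N + 1) ≤ 0), neg_sub]
        rw [hnn]
        have hA1 : 0 < t (k + N) - ‖l‖ := hposk k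
        have hA2 : 0 < t (k + N + 1) - ‖l‖ := htpos _ hk2
        have hb1 : (t (k + N + 1) - ‖l‖) ≤ ‖d (k + N + 1)‖ := hd_norm _ hk2
        have hb2 : (t (k + N) - ‖l‖) ≤ ‖d (k + N)‖ := hd_norm _ hk1
        have hRHS : (t (k + N) - ‖l‖)⁻¹ - (t (k + N + 1) - ‖l‖)⁻¹
            = (t (k + N + 1) - t (k + N)) * (t (k + N + 1) - ‖l‖)⁻¹ * (t (k + N) - ‖l‖)⁻¹ := by
          have hr : (t (k + N + 1) - t (k + N)) * (t (k + N + 1) - ‖l‖)⁻¹ * (t (k + N) - ‖l‖)⁻¹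
              = (t (k + N + 1) - ‖l‖) * (t (k + N + 1) - ‖l‖)⁻¹ * (t (k + N) - ‖l‖)⁻¹
                - (t (k + N) - ‖l‖) * (t (k + N) - ‖l‖)⁻¹ * (t (k + N + 1) - ‖l‖)⁻¹ := by ring
          rw [hr, mul_inv_cancel₀ hA1.ne', mul_inv_cancel₀ hA2.ne', one_mul, one_mul]
        rw [hRHS]
        have g1 : ‖d (k + N + 1)‖⁻¹ ≤ (t (k + N + 1) - ‖l‖)⁻¹ := inv_anti₀ hA2 hb1
        have g2 : ‖d (k + N)‖⁻¹ ≤ (t (k + N) - ‖l‖)⁻¹ := inv_anti₀ hA1 hb2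
        exact mul_le_mul (mul_le_mul_of_nonneg_left g1 (by linarith)) g2
          (inv_nonneg.2 (norm_nonneg _))
          (mul_nonneg (by linarith) (inv_nonneg.2 hA2.le))
      have hidx : ∀ k : ℕ, k + 1 + N = k + N + 1 := fun k => by omega
      have hsum2 : Summable (fun k : ℕ => (t (k + N) - ‖l‖)⁻¹ - (t (k + N + 1) - ‖l‖)⁻¹) := by
        apply summable_of_sum_range_le (c := (t N - ‖l‖)⁻¹)
        · intro k
          have h1 : (t (k + N + 1) - ‖l‖)⁻¹ ≤ (t (k + N) - ‖l‖)⁻¹ :=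
            inv_anti₀ (hposk k) (by have := ht (Nat.le_succ (k + N)); linarith)
          linarith
        · intro M
          have hts := Finset.sum_range_sub' (fun k => (t (k + N) - ‖l‖)⁻¹) M
          simp only [hidx, Nat.zero_add] at hts
          rw [hts]
          have h0 : 0 ≤ (t (M + N) - ‖l‖)⁻¹ := le_of_lt (inv_pos.2 (hposk M))
          linarith
      exact Summable.of_nonneg_of_le (fun k => norm_nonneg _) hle hsum2
    -- the series Σ (c n - c (n+1)) • G (n+1) converges
    obtain ⟨w', hT⟩ : ∃ w', Tendsto (fun M => ∑ n ∈ Finset.range M,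
        (c n - c (n + 1)) • (∑ k ∈ Finset.range (n + 1), e k)) atTop (𝓝 w') := by
      apply exists_limit p hp hmono
      intro i ε hε
      have hGp : Tendsto (fun M => p i (∑ n ∈ Finset.range M, e n)) atTop (𝓝 (p i (1:A))) :=
        ((hp.continuous_seminorm i).tendsto 1).comp hG
      obtain ⟨B, hB⟩ := hGp.bddAbove_range
      set B' : ℝ := max B 1 with hB'
      have hB'pos : 0 < B' := lt_of_lt_of_le one_pos (le_max_right _ _)
      have hBle : ∀ M, p i (∑ n ∈ Finset.range M, e n) ≤ B' := fun M =>
        le_trans (hB ⟨M, rfl⟩) (le_max_left _ _)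
      have hP : CauchySeq (fun M => ∑ n ∈ Finset.range M, ‖c (n + 1) - c n‖) :=
        hvar.hasSum.tendsto_sum_nat.cauchySeq
      rw [Metric.cauchySeq_iff] at hP
      obtain ⟨K, hK⟩ := hP (ε / B') (by positivity)
      refine ⟨K, ?_⟩
      have main : ∀ m n, K ≤ m → K ≤ n → m ≤ n →
          p i ((∑ j ∈ Finset.range n, (c j - c (j + 1)) • (∑ k ∈ Finset.range (j + 1), e k))
            - ∑ j ∈ Finset.range m, (c j - c (j + 1)) • (∑ k ∈ Finset.range (j + 1), e k)) < ε := by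
        intro m n hm hn hmn
        rw [← Finset.sum_Ico_eq_sub _ hmn]
        have hstep : p i (∑ j ∈ Finset.Ico m n,
            (c j - c (j + 1)) • (∑ k ∈ Finset.range (j + 1), e k))
            ≤ ∑ j ∈ Finset.Ico m n, ‖c (j + 1) - c j‖ * B' := by
          refine le_trans (seminorm_sum_le _ _ _) (Finset.sum_le_sum fun j _ => ?_)
          rw [map_smul_eq_mul, norm_sub_rev]
          exact mul_le_mul_of_nonneg_left (hBle (j + 1)) (norm_nonneg _)
        have hsum : ∑ j ∈ Finset.Ico m n, ‖c (j + 1) - c j‖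
            = (∑ j ∈ Finset.range n, ‖c (j + 1) - c j‖)
              - ∑ j ∈ Finset.range m, ‖c (j + 1) - c j‖ :=
          Finset.sum_Ico_eq_sub _ hmn
        have hdist := hK n hn m hm
        rw [Real.dist_eq] at hdist
        have habs : (∑ j ∈ Finset.range n, ‖c (j + 1) - c j‖)
            - ∑ j ∈ Finset.range m, ‖c (j + 1) - c j‖ < ε / B' :=
          lt_of_le_of_lt (le_abs_self _) hdist
        calc p i (∑ j ∈ Finset.Ico m n, (c j - c (j + 1)) • (∑ k ∈ Finset.range (j + 1), e k))
            ≤ ∑ j ∈ Finset.Ico m n, ‖c (j + 1) - c j‖ * B' := hstep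
          _ = ((∑ j ∈ Finset.range n, ‖c (j + 1) - c j‖)
              - ∑ j ∈ Finset.range m, ‖c (j + 1) - c j‖) * B' := by
              rw [← Finset.sum_mul, hsum]
          _ < (ε / B') * B' := mul_lt_mul_of_pos_right habs hB'pos
          _ = ε := div_mul_cancel₀ ε hB'pos.ne'
      intro m hm n hn
      rcases le_total m n with h | h
      · exact main m n hm hn h
      · rw [map_sub_rev]
        exact main n m hn hm h
    -- the inverse series converges
    have hW : Tendsto (fun M => ∑ n ∈ Finset.range M, c n • e n) atTop (𝓝 w') := by
      have hcG : Tendsto (fun M => c M • (∑ n ∈ Finset.range (M + 1), e n)) atTop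
          (𝓝 ((0:ℂ) • (1:A))) :=
        Tendsto.smul hc0 (hG.comp (tendsto_add_atTop_nat 1))
      have hS1 : Tendsto (fun M => ∑ n ∈ Finset.range (M + 1), c n • e n) atTop
          (𝓝 ((0:ℂ) • (1:A) + w')) := by
        have := hcG.add hT
        exact this.congr fun M => (abel_id c e M).symm
      rw [zero_smul, zero_add] at hS1
      exact (tendsto_add_atTop_iff_nat 1).1 hS1
    -- the series Σ d n • e n converges to z := x - l•1 + F
    set F : A := ∑ n ∈ Finset.range N, ((1:ℂ) - ((t n : ℂ) - l)) • e n with hF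
    have hxl : Tendsto (fun M => ∑ n ∈ Finset.range M, ((t n : ℂ) - l) • e n) atTop
        (𝓝 (x - l • 1)) := by
      have h1 : ∀ M, ∑ n ∈ Finset.range M, ((t n : ℂ) - l) • e n
          = (∑ n ∈ Finset.range M, (t n : ℂ) • e n) - l • (∑ n ∈ Finset.range M, e n) := by
        intro M
        rw [Finset.smul_sum, ← Finset.sum_sub_distrib]
        exact Finset.sum_congr rfl fun n _ => by rw [sub_smul]
      exact (hx.sub (hG.const_smul l)).congr fun M => (h1 M).symm
    have hZ : Tendsto (fun M => ∑ n ∈ Finset.range M, d n • e n) atTop (𝓝 (x - l • 1 + F)) := by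
      have hZeq : ∀ᶠ M in atTop, (∑ n ∈ Finset.range M, ((t n : ℂ) - l) • e n) + F
          = ∑ n ∈ Finset.range M, d n • e n := by
        filter_upwards [eventually_ge_atTop N] with M hM
        have hterm : ∀ n, d n = ((t n : ℂ) - l)
            + (if n < N then (1:ℂ) - ((t n : ℂ) - l) else 0) := by
          intro n
          by_cases h : n < N
          · simp [hd, h]
          · simp [hd, h]
        have hsplit : ∑ n ∈ Finset.range M, d n • e n
            = (∑ n ∈ Finset.range M, ((t n : ℂ) - l) • e n)
              + ∑ n ∈ Finset.range M, (if n < N then (1:ℂ) - ((t n : ℂ) - l) else 0) • e n := by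
          rw [← Finset.sum_add_distrib]
          exact Finset.sum_congr rfl fun n _ => by rw [← add_smul, ← hterm n]
        have hFeq : ∑ n ∈ Finset.range M, (if n < N then (1:ℂ) - ((t n : ℂ) - l) else 0) • e n
            = F := by
          rw [hF]
          rw [← Finset.sum_subset (Finset.range_subset_range.2 hM) (fun n _ hn => by
            simp [Nat.not_lt.mp (fun h => hn (Finset.mem_range.mpr h))])]
          exact Finset.sum_congr rfl fun n hn => by
            simp [Finset.mem_range.mp hn]
        rw [hsplit, hFeq]
      exact ((hxl.add tendsto_const_nhds).congr' hZeq)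
    -- the product of the partial sums is the partial sum of e
    have hZW : ∀ M, (∑ n ∈ Finset.range M, d n • e n) * (∑ m ∈ Finset.range M, c m • e m)
        = ∑ n ∈ Finset.range M, e n := by
      intro M
      rw [Finset.sum_mul_sum]
      have h1 : ∀ n ∈ Finset.range M, ∑ m ∈ Finset.range M, (d n • e n) * (c m • e m) = e n := by
        intro n hn
        have h2 : ∀ m ∈ Finset.range M, (d n • e n) * (c m • e m)
            = if n = m then (d n * c m) • e n else 0 := by
          intro m _
          rw [smul_mul_assoc, Algebra.mul_smul_comm, smul_smul, horth n m]
          by_cases h : n = m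
          · simp [h]
          · simp [h]
        rw [Finset.sum_congr rfl h2, Finset.sum_ite_eq (Finset.range M) n
          (fun m => (d n * c m) • e n)]
        simp [hn, hdc n]
      exact Finset.sum_congr rfl h1
    have hprod1 : Tendsto (fun M => (∑ n ∈ Finset.range M, d n • e n)
        * (∑ m ∈ Finset.range M, c m • e m)) atTop (𝓝 ((x - l • 1 + F) * w')) :=
      hmulT _ _ _ _ hZ hW
    have hprod2 : Tendsto (fun M => (∑ n ∈ Finset.range M, d n • e n)
        * (∑ m ∈ Finset.range M, c m • e m)) atTop (𝓝 (1:A)) :=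
      hG.congr fun M => (hZW M).symm
    have hzw1 : (x - l • 1 + F) * w' = 1 := tendsto_nhds_unique hprod1 hprod2
    -- f of z is zero
    have hfz : f (x - l • 1 + F) = 0 := by
      set g : A →ₗ[ℂ] ℂ := IsLinearMap.mk' f hlin with hg
      have hgf : ∀ y, g y = f y := fun y => rfl
      have hgF : g F = 0 := by
        rw [hF, map_sum]
        apply Finset.sum_eq_zero
        intro n _
        rw [map_smul, smul_eq_mul, hgf, hE n, mul_zero]
      have hcalc : g (x - l • 1 + F) = g x - l * g 1 + g F := by
        rw [map_add, map_sub, map_smul, smul_eq_mul]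
      rw [← hgf, hcalc, hgF, hgf, hgf, hf1, ← hl, mul_one, sub_self, add_zero]
    have hcontra : (1:ℂ) = 0 := by
      calc (1:ℂ) = f 1 := hf1.symm
        _ = f ((x - l • 1 + F) * w') := by rw [hzw1]
        _ = f (x - l • 1 + F) * f w' := hmul _ _
        _ = 0 := by rw [hfz, zero_mul]
    exact one_ne_zero hcontra
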